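/- Let G be a perfect group, H a group with a surjective homomorphism onto G whose kernel lies in the hypercenter Z_∞(H), and suppose H is finite. If the nilpotent residual quotient H/γ_∞(H) has nilpotency class at most c, then the hypercenter Z_∞(H) has nilpotency class at most c + 1. -/

import Mathlib

open Subgroup
open scoped commutatorElement

/-- If `A = ⁅A, ⊤⁆` and `A` lies in some term of the upper central series, then `A = ⊥`. -/
lemma aux_descend {H : Type*} [Group H] (A : Subgroup H) (hA : A = ⁅A, (⊤ : Subgroup H)⁆) :
    ∀ j, A ≤ Subgroup.upperCentralSeries H j → A = ⊥ := by
  intro j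
  induction j with
  | zero => intro h; exact le_bot_iff.mp h
  | succ j ih =>
    intro h
    apply ih
    calc A = ⁅A, (⊤ : Subgroup H)⁆ := hA
      _ ≤ ⁅Subgroup.upperCentralSeries H (j + 1), (⊤ : Subgroup H)⁆ := commutator_mono h le_rfl
      _ ≤ Subgroup.upperCentralSeries H j := by
          rw [commutator_le]
          intro g₁ hg₁ g₂ _
          exact (Subgroup.mem_upperCentralSeries_succ_iff.mp hg₁) g₂

/-- If `K = ⁅K, ⊤⁆` and `K` is normal, then `K` commutes with every term of the
upper central series. -/
lemma aux_comm {H : Type*} [Group H] (K : Subgroup H) [K.Normal]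
    (hK : K = ⁅K, (⊤ : Subgroup H)⁆) :
    ∀ i, ⁅K, Subgroup.upperCentralSeries H i⁆ = ⊥ := by
  intro i
  induction i with
  | zero => rw [Subgroup.upperCentralSeries_zero, commutator_bot_right]
  | succ i ih =>
    set Zi1 := Subgroup.upperCentralSeries H (i + 1) with hZi1
    set A : Subgroup H := ⁅K, Zi1⁆ with hAdef
    have hAZ : A ≤ Subgroup.upperCentralSeries H i := by
      rw [hAdef, commutator_le]
      intro g₁ hg₁ g₂ hg₂
      have := (Subgroup.mem_upperCentralSeries_succ_iff.mp hg₂) g₁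
      have hinv : ⁅g₂, g₁⁆ ∈ Subgroup.upperCentralSeries H i := this
      have : ⁅g₁, g₂⁆ = ⁅g₂, g₁⁆⁻¹ := (commutatorElement_inv g₂ g₁).symm
      rw [this]
      exact (Subgroup.upperCentralSeries H i).inv_mem hinv
    set N : Subgroup H := ⁅A, (⊤ : Subgroup H)⁆ with hNdef
    have hNA : N ≤ A := commutator_le_left A ⊤
    -- work in the quotient H ⧸ N and apply the three subgroups lemma
    set φ := QuotientGroup.mk' N with hφ
    have h1 : ⁅⁅map φ (⊤ : Subgroup H), map φ Zi1⁆, map φ K⁆ = ⊥ := by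
      have hTZ : ⁅(⊤ : Subgroup H), Zi1⁆ ≤ Subgroup.upperCentralSeries H i := by
        rw [commutator_le]
        intro g₁ _ g₂ hg₂
        have hinv : ⁅g₂, g₁⁆ ∈ Subgroup.upperCentralSeries H i :=
          (Subgroup.mem_upperCentralSeries_succ_iff.mp hg₂) g₁
        have : ⁅g₁, g₂⁆ = ⁅g₂, g₁⁆⁻¹ := (commutatorElement_inv g₂ g₁).symm
        rw [this]
        exact (Subgroup.upperCentralSeries H i).inv_mem hinv
      have hbot : ⁅⁅(⊤ : Subgroup H), Zi1⁆, K⁆ = ⊥ := by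
        rw [eq_bot_iff]
        refine le_trans (commutator_mono hTZ le_rfl) ?_
        rw [commutator_comm, ih]
      rw [← map_commutator, ← map_commutator, hbot, Subgroup.map_bot]
    have h2 : ⁅⁅map φ Zi1, map φ K⁆, map φ (⊤ : Subgroup H)⁆ = ⊥ := by
      rw [← map_commutator, ← map_commutator, commutator_comm Zi1 K, ← hAdef, ← hNdef]
      rw [Subgroup.map_eq_bot_iff, hφ, QuotientGroup.ker_mk']
    have h3 : ⁅⁅map φ K, map φ (⊤ : Subgroup H)⁆, map φ Zi1⁆ = ⊥ :=
      commutator_commutator_eq_bot_of_rotate h1 h2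
    have hAN : A ≤ N := by
      rw [← map_commutator, ← map_commutator, ← hK, ← hAdef,
        Subgroup.map_eq_bot_iff, hφ, QuotientGroup.ker_mk'] at h3
      exact h3
    have hAA : A = ⁅A, (⊤ : Subgroup H)⁆ := le_antisymm hAN hNA
    exact aux_descend A hAA i hAZ

/-- Let `G` be perfect, `H` finite with a surjection `f : H → G` whose kernel lies in the
hypercenter `Z_∞(H) = ⨆ n, upperCentralSeries H n`. If the nilpotent residual quotient
`H/γ_∞(H)` has nilpotency class at most `c` (where `γ_∞(H) = lowerCentralSeries H t` is
the terminal member of the lower central series), then the hypercenter of `H` is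
nilpotent of class at most `c + 1`. -/
theorem stmt_10 {H G : Type*} [Group H] [Finite H] [Group G]
    (hG : ⁅(⊤ : Subgroup G), (⊤ : Subgroup G)⁆ = ⊤)
    (f : H →* G) (hf : Function.Surjective f)
    (hker : f.ker ≤ ⨆ n, _root_.upperCentralSeries H n)
    (t : ℕ) (ht : ∀ s ≥ t, Subgroup.lowerCentralSeries (⊤ : Subgroup H) s = Subgroup.lowerCentralSeries (⊤ : Subgroup H) t)
    (c : ℕ) (hc : Subgroup.lowerCentralSeries (⊤ : Subgroup (H ⧸ Subgroup.lowerCentralSeries (⊤ : Subgroup H) t)) c = ⊥) :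
    Subgroup.lowerCentralSeries (⊤ : Subgroup (↥(⨆ n, _root_.upperCentralSeries H n))) (c + 1) = ⊥ := by
  set Z : Subgroup H := ⨆ n, _root_.upperCentralSeries H n with hZdef
  set K : Subgroup H := Subgroup.lowerCentralSeries (⊤ : Subgroup H) t with hKdef
  have hK : K = ⁅K, (⊤ : Subgroup H)⁆ := (ht (t + 1) (Nat.le_succ t)).symm
  -- ⁅K, Z⁆ = ⊥
  have hKZ : ⁅K, Z⁆ = ⊥ := by
    rw [eq_bot_iff, commutator_le]
    intro g₁ hg₁ g₂ hg₂
    rw [hZdef] at hg₂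
    obtain ⟨i, hi⟩ := (Subgroup.mem_iSup_of_directed
      (Subgroup.upperCentralSeries_mono H).directed_le).mp hg₂
    have := commutator_mem_commutator hg₁ hi
    rw [aux_comm K hK i] at this
    exact this
  -- γ_c(H) ≤ K
  have hlc : Subgroup.lowerCentralSeries (⊤ : Subgroup H) c ≤ K := by
    have h := Subgroup.lowerCentralSeries.map (QuotientGroup.mk' K) c
    rw [hc] at h
    have := (Subgroup.map_eq_bot_iff _).mp (le_bot_iff.mp h)
    rwa [QuotientGroup.ker_mk'] at this
  -- now bound the lower central series of Z
  have hmap : Subgroup.map Z.subtype (Subgroup.lowerCentralSeries (⊤ : Subgroup ↥Z) (c + 1)) = ⊥ := by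
    have heq : Subgroup.lowerCentralSeries (⊤ : Subgroup ↥Z) (c + 1) = ⁅Subgroup.lowerCentralSeries (⊤ : Subgroup ↥Z) c, (⊤ : Subgroup ↥Z)⁆ :=
      rfl
    rw [heq, map_commutator, eq_bot_iff]
    have h₁ : Subgroup.map Z.subtype (Subgroup.lowerCentralSeries (⊤ : Subgroup ↥Z) c) ≤ K :=
      le_trans (Subgroup.lowerCentralSeries_map_subtype_le Z c) hlc
    have h₂ : Subgroup.map Z.subtype (⊤ : Subgroup ↥Z) ≤ Z := by
      rintro x ⟨y, -, rfl⟩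
      exact y.2
    calc ⁅Subgroup.map Z.subtype (Subgroup.lowerCentralSeries (⊤ : Subgroup ↥Z) c),
          Subgroup.map Z.subtype (⊤ : Subgroup ↥Z)⁆
        ≤ ⁅K, Z⁆ := commutator_mono h₁ h₂
      _ ≤ ⊥ := hKZ.le
  have := (Subgroup.map_eq_bot_iff _).mp hmap
  rwa [Subgroup.ker_subtype, le_bot_iff] at this
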